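/- Let Z be a proper metric space, τ > 0, and g : Z → [τ,∞) a lower semicontinuous function. If x_n → x and y_n → y are convergent sequences in Z, then F_g(x,y) ≤ liminf_{n→∞} F_g(x_n,y_n). -/

import Mathlib

open MeasureTheory Metric Filter Set Topology
open scoped NNReal ENNReal

noncomputable section

universe u

/-- The measure `μ` is doubling with constant `Cd`:
`0 < μ(B(x,2r)) ≤ Cd·μ(B(x,r)) < ∞` for every `x` and every `r > 0`. -/
def IsDoublingWith {X : Type u} [PseudoMetricSpace X] [MeasurableSpace X]
    (μ : Measure X) (Cd : ℝ≥0) : Prop :=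
  ∀ (x : X) (r : ℝ), 0 < r →
    0 < μ (ball x (2 * r)) ∧
      μ (ball x (2 * r)) ≤ (Cd : ℝ≥0∞) * μ (ball x r) ∧
      (Cd : ℝ≥0∞) * μ (ball x r) < ⊤

/-- `X` is a geodesic space: any two points are joined by a unit-speed geodesic. -/
def IsGeodesic (X : Type u) [PseudoMetricSpace X] : Prop :=
  ∀ x y : X, ∃ γ : ℝ → X,
    LipschitzOnWith 1 γ (Icc 0 (dist x y)) ∧ γ 0 = x ∧ γ (dist x y) = y

/-- `g` is an upper gradient of `u`: for every `L ≥ 0` and every `1`-Lipschitz curve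
`γ : [0,L] → X`, `|u(γ 0) − u(γ L)| ≤ ∫₀^L g(γ t) dt`. -/
def IsUpperGradientOf {X : Type u} [PseudoMetricSpace X] (g u : X → ℝ) : Prop :=
  ∀ L : ℝ, 0 ≤ L → ∀ γ : ℝ → X, LipschitzOnWith 1 γ (Icc 0 L) →
    |u (γ 0) - u (γ L)| ≤ ∫ t in (0:ℝ)..L, g (γ t)

/-- The lower pointwise Lipschitz constant
`lip u (x) = liminf_{r→0} r⁻¹ sup_{y ∈ B(x,r)} |u y − u x|`. -/
def lipConst {X : Type u} [PseudoMetricSpace X] (u : X → ℝ) (x : X) : ℝ≥0∞ :=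
  Filter.liminf
    (fun r : ℝ => ⨆ y ∈ ball x r, ENNReal.ofReal (|u y - u x| / r)) (𝓝[>] (0:ℝ))

/-- `u` is locally Lipschitz on `W`: Lipschitz on every closed bounded subset of `W`. -/
def LocallyLipschitzOnSet {X : Type u} [PseudoMetricSpace X] (u : X → ℝ) (W : Set X) : Prop :=
  ∀ K : Set X, IsClosed K → Bornology.IsBounded K → K ⊆ W →
    ∃ L : ℝ≥0, LipschitzOnWith L u K

/-- `u i → f` in `L¹_loc(W)`. -/
def TendstoL1loc {X : Type u} [PseudoMetricSpace X] [MeasurableSpace X]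
    (μ : Measure X) (u : ℕ → X → ℝ) (f : X → ℝ) (W : Set X) : Prop :=
  ∀ K : Set X, IsClosed K → Bornology.IsBounded K → K ⊆ W →
    Tendsto (fun i => ∫⁻ x in K, ENNReal.ofReal |u i x - f x| ∂μ) atTop (𝓝 0)

/-- Total variation `V(f,W)` of `f` on an open set `W`:
the infimum over sequences of locally Lipschitz functions converging to `f` in `L¹_loc(W)`
of the liminf of `∫_W lip u_i dμ`. -/
def totVarOn {X : Type u} [PseudoMetricSpace X] [MeasurableSpace X]
    (μ : Measure X) (f : X → ℝ) (W : Set X) : ℝ≥0∞ :=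
  ⨅ (us : ℕ → X → ℝ) (_ : ∀ i, LocallyLipschitzOnSet (us i) W)
    (_ : TendstoL1loc μ us f W),
    Filter.liminf (fun i => ∫⁻ x in W, lipConst (us i) x ∂μ) atTop

/-- Total variation `V(f,A)` of `f` on an arbitrary set `A`:
infimum of `V(f,W)` over open `W ⊇ A`. -/
def totVarSet {X : Type u} [PseudoMetricSpace X] [MeasurableSpace X]
    (μ : Measure X) (f : X → ℝ) (A : Set X) : ℝ≥0∞ :=
  ⨅ (W : Set X) (_ : IsOpen W) (_ : A ⊆ W), totVarOn μ f W

/-- `f` is of bounded variation: locally integrable and `V(f,X) < ∞`. -/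
def IsBV {X : Type u} [MetricSpace X] [MeasurableSpace X]
    (μ : Measure X) (f : X → ℝ) : Prop :=
  LocallyIntegrable f μ ∧ totVarOn μ f Set.univ < ⊤

/-- `(X,d,μ)` supports a `1`-Poincaré inequality with constant `CP`. -/
def SupportsPoincare {X : Type u} [MetricSpace X] [MeasurableSpace X]
    (μ : Measure X) (CP : ℝ) : Prop :=
  ∀ u : X → ℝ, LocallyLipschitzOnSet u Set.univ →
    ∀ g : X → ℝ, (∀ x, 0 ≤ g x) → Measurable g → IsUpperGradientOf g u →
      ∀ (x : X) (r : ℝ), 0 < r →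
        (⨍ y in ball x r, |u y - (⨍ z in ball x r, u z ∂μ)| ∂μ) ≤
          CP * r * (⨍ y in ball x r, g y ∂μ)

/-- Standing assumptions: a complete geodesic metric measure space with at least two
points, whose measure is doubling and supports a 1-Poincaré inequality. -/
def GoodSpace (X : Type u) [MetricSpace X] [MeasurableSpace X]
    (μ : Measure X) (Cd : ℝ≥0) (CP : ℝ) : Prop :=
  Nontrivial X ∧ CompleteSpace X ∧ IsGeodesic X ∧
    IsDoublingWith μ Cd ∧ SupportsPoincare μ CP

/-- The codimension-1 Hausdorff measure
`𝓗(A) = sup_{δ>0} inf { Σ μ(B_i)/r_i : 0 < r_i ≤ δ, A ⊆ ⋃ B_i }`,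
the infimum over countable coverings of `A` by balls (balls of nonpositive radius
are empty and contribute `0`). -/
def codimOneH {X : Type u} [PseudoMetricSpace X] [MeasurableSpace X]
    (μ : Measure X) (A : Set X) : ℝ≥0∞ :=
  ⨆ (δ : ℝ) (_ : 0 < δ),
    ⨅ (c : ℕ → X) (r : ℕ → ℝ) (_ : ∀ i, r i ≤ δ)
      (_ : A ⊆ ⋃ i, ball (c i) (r i)),
      ∑' i, if 0 < r i then μ (ball (c i) (r i)) / ENNReal.ofReal (r i) else 0

/-- The measure theoretic boundary `∂*E`. -/
def measBdry {X : Type u} [PseudoMetricSpace X] [MeasurableSpace X]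
    (μ : Measure X) (E : Set X) : Set X :=
  {x : X |
    0 < Filter.limsup (fun r : ℝ => μ (E ∩ ball x r) / μ (ball x r)) (𝓝[>] (0:ℝ)) ∧
    0 < Filter.limsup (fun r : ℝ => μ (Eᶜ ∩ ball x r) / μ (ball x r)) (𝓝[>] (0:ℝ))}

/-- `A` has density `0` at `x`. -/
def DensityZeroAt {X : Type u} [PseudoMetricSpace X] [MeasurableSpace X]
    (μ : Measure X) (A : Set X) (x : X) : Prop :=
  Tendsto (fun r : ℝ => μ (A ∩ ball x r) / μ (ball x r)) (𝓝[>] (0:ℝ)) (𝓝 0)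

/-- `A` has density `1` at `x`. -/
def DensityOneAt {X : Type u} [PseudoMetricSpace X] [MeasurableSpace X]
    (μ : Measure X) (A : Set X) (x : X) : Prop :=
  Tendsto (fun r : ℝ => μ (A ∩ ball x r) / μ (ball x r)) (𝓝[>] (0:ℝ)) (𝓝 1)

/-- `x` is a Lebesgue point of `u`. -/
def LebesguePointOf {X : Type u} [MetricSpace X] [MeasurableSpace X]
    (μ : Measure X) (u : X → ℝ) (x : X) : Prop :=
  Tendsto (fun r : ℝ => ⨍ y in ball x r, |u y - u x| ∂μ) (𝓝[>] (0:ℝ)) (𝓝 0)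

/-- `u` is a Borel representative whose value at each Lebesgue point equals the limit
of its ball averages. -/
def PreciseRep {X : Type u} [MetricSpace X] [MeasurableSpace X]
    (μ : Measure X) (u : X → ℝ) : Prop :=
  Measurable u ∧ ∀ (x : X) (c : ℝ),
    Tendsto (fun r : ℝ => ⨍ y in ball x r, u y ∂μ) (𝓝[>] (0:ℝ)) (𝓝 c) → u x = c

/-- The restricted maximal function `M_R ν (x) = sup_{0<r≤R} ν(B(x,r))/μ(B(x,r))`. -/
def restrMaximal {X : Type u} [PseudoMetricSpace X] [MeasurableSpace X]
    (μ ν : Measure X) (R : ℝ) (x : X) : ℝ≥0∞ :=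
  ⨆ (r : ℝ) (_ : 0 < r) (_ : r ≤ R), ν (ball x r) / μ (ball x r)

/-- `F_g(x,y)`: the infimum of `∫_γ g ds` over 1-Lipschitz curves `γ : [0,L] → Z`
joining `x` to `y` (the infimum over the empty set is `∞`). -/
def curveInf {Z : Type u} [PseudoMetricSpace Z] (g : Z → ℝ) (x y : Z) : ℝ≥0∞ :=
  ⨅ (L : ℝ) (_ : 0 ≤ L) (γ : ℝ → Z) (_ : LipschitzOnWith 1 γ (Icc 0 L))
    (_ : γ 0 = x) (_ : γ L = y),
    ∫⁻ t in Icc (0:ℝ) L, ENNReal.ofReal (g (γ t))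

/-- Weak-star convergence of measures: test against continuous, compactly
supported functions. -/
def WeakStar {Z : Type u} [MetricSpace Z] [MeasurableSpace Z]
    (ν : ℕ → Measure Z) (m : Measure Z) : Prop :=
  ∀ φ : Z → ℝ, Continuous φ → HasCompactSupport φ →
    Tendsto (fun n => ∫ x, φ x ∂(ν n)) atTop (𝓝 (∫ x, φ x ∂m))

/-- `φ ∈ BV_c(U)`: a BV function whose support is compact and contained in `U`. -/
def MemBVc {X : Type u} [MetricSpace X] [MeasurableSpace X]
    (μ : Measure X) (φ : X → ℝ) (U : Set X) : Prop :=
  IsBV μ φ ∧ IsCompact (tsupport φ) ∧ tsupport φ ⊆ U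


theorem statement15 {Z : Type u} [MetricSpace Z] [ProperSpace Z]
    (τ : ℝ) (hτ : 0 < τ) (g : Z → ℝ) (hg : LowerSemicontinuous g)
    (hgτ : ∀ w : Z, τ ≤ g w)
    (x y : Z) (xn yn : ℕ → Z)
    (hx : Tendsto xn atTop (𝓝 x)) (hy : Tendsto yn atTop (𝓝 y)) :
    curveInf g x y ≤ Filter.liminf (fun n => curveInf g (xn n) (yn n)) atTop := by
  set l := Filter.liminf (fun n => curveInf g (xn n) (yn n)) atTop with hldef
  refine ENNReal.le_of_forall_pos_le_add fun ε hε hltop => ?_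
  have hne : l + (ε:ℝ≥0∞) ≠ ⊤ := by
    simp [ENNReal.add_ne_top, hltop.ne]
  have hlε : l < l + ε := ENNReal.lt_add_right hltop.ne (by exact_mod_cast hε.ne')
  have hfreq : ∃ᶠ n in atTop, curveInf g (xn n) (yn n) < l + ε :=
    Filter.frequently_lt_of_liminf_lt (by isBoundedDefault) hlε
  obtain ⟨φ, hφmono, hφ⟩ := Filter.extraction_of_frequently_atTop hfreq
  have hex : ∀ k, ∃ L : ℝ, 0 ≤ L ∧ ∃ γ : ℝ → Z, LipschitzOnWith 1 γ (Icc 0 L) ∧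
      γ 0 = xn (φ k) ∧ γ L = yn (φ k) ∧
      (∫⁻ t in Icc (0:ℝ) L, ENNReal.ofReal (g (γ t))) ≤ l + ε := by
    intro k
    have h := hφ k
    simp only [curveInf, iInf_lt_iff] at h
    obtain ⟨L, hL, γ, hlip, h0, hL', hint⟩ := h
    exact ⟨L, hL, γ, hlip, h0, hL', hint.le⟩
  choose L hL0 γ hlip hγ0 hγL hint using hex
  -- bound on lengths
  set B : ℝ := (l + ε).toReal / τ with hBdef
  have hLB : ∀ k, L k ≤ B := by
    intro k
    have h1 : ENNReal.ofReal (τ * L k) ≤ l + ε := by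
      have hvol : ENNReal.ofReal τ * volume (Icc (0:ℝ) (L k)) = ENNReal.ofReal (τ * L k) := by
        rw [Real.volume_Icc, ← ENNReal.ofReal_mul hτ.le, sub_zero]
      calc ENNReal.ofReal (τ * L k) = ∫⁻ _ in Icc (0:ℝ) (L k), ENNReal.ofReal τ := by
            rw [setLIntegral_const, hvol]
        _ ≤ ∫⁻ t in Icc (0:ℝ) (L k), ENNReal.ofReal (g (γ k t)) :=
            lintegral_mono fun t => ENNReal.ofReal_le_ofReal (hgτ _)
        _ ≤ l + ε := hint k
    have h2 : τ * L k ≤ (l + ε).toReal := by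
      rw [ENNReal.ofReal_le_iff_le_toReal hne] at h1
      exact h1
    rw [hBdef, le_div_iff₀ hτ]
    linarith [h2]
  have hB0 : 0 ≤ B := le_trans (hL0 0) (hLB 0)
  -- clamped curves, globally 1-Lipschitz
  set c : ℕ → ℝ → ℝ := fun k t => max 0 (min t (L k)) with hcdef
  have hcmem : ∀ k t, c k t ∈ Icc 0 (L k) := by
    intro k t
    constructor
    · exact le_max_left _ _
    · exact max_le (hL0 k) (min_le_right _ _)
  have hclip : ∀ k, LipschitzWith 1 (c k) := fun k =>
    (LipschitzWith.id.min_const (L k)).const_max 0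
  set γ' : ℕ → ℝ → Z := fun k t => γ k (c k t) with hγ'def
  have hγ'lip : ∀ k, LipschitzWith 1 (γ' k) := by
    intro k
    have := ((hlip k).comp ((hclip k).lipschitzOnWith (s := univ))
      (fun t _ => hcmem k t))
    rw [lipschitzOnWith_univ] at this
    rw [one_mul] at this; exact this
  have hceq : ∀ k t, t ∈ Icc 0 (L k) → c k t = t := by
    intro k t ht
    simp [hcdef, min_eq_left ht.2, max_eq_right ht.1]
  have hγ'0 : ∀ k, γ' k 0 = xn (φ k) := by
    intro k
    rw [hγ'def]
    simp only
    rw [hceq k 0 ⟨le_refl _, hL0 k⟩, hγ0 k]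
  have hγ'L : ∀ k, γ' k (L k) = yn (φ k) := by
    intro k
    rw [hγ'def]
    simp only
    rw [hceq k (L k) ⟨hL0 k, le_refl _⟩, hγL k]
  -- all curves live in a fixed compact ball
  have hxφ : Tendsto (fun k => xn (φ k)) atTop (𝓝 x) := hx.comp (hφmono.tendsto_atTop)
  have hdx : Tendsto (fun k => dist (xn (φ k)) x) atTop (𝓝 0) := by
    simpa [dist_self] using hxφ.dist (tendsto_const_nhds : Tendsto (fun _ : ℕ => x) atTop (𝓝 x))
  obtain ⟨C, hC⟩ := hdx.bddAbove_range
  have hCb : ∀ k, dist (xn (φ k)) x ≤ C := fun k => hC (mem_range_self k)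
  set K : Set Z := closedBall x (B + C) with hKdef
  have hKcomp : IsCompact K := isCompact_closedBall x (B + C)
  have hγ'K : ∀ k t, γ' k t ∈ K := by
    intro k t
    have h1 : dist (γ' k t) (γ' k 0) ≤ L k := by
      have := (hlip k).dist_le_mul (c k t) (hcmem k t) (c k 0) (hcmem k 0)
      rw [hceq k 0 ⟨le_refl _, hL0 k⟩] at this
      calc dist (γ' k t) (γ' k 0) ≤ 1 * dist (c k t) 0 := by
            simpa [hγ'def, hceq k 0 ⟨le_refl _, hL0 k⟩] using this
        _ = |c k t| := by rw [one_mul, Real.dist_eq, sub_zero]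
        _ ≤ L k := by
            rw [abs_of_nonneg (hcmem k t).1]; exact (hcmem k t).2
    have h2 : dist (γ' k t) x ≤ L k + dist (xn (φ k)) x := by
      calc dist (γ' k t) x ≤ dist (γ' k t) (γ' k 0) + dist (γ' k 0) x := dist_triangle _ _ _
        _ ≤ L k + dist (xn (φ k)) x := add_le_add h1 (le_of_eq (by rw [hγ'0 k]))
    exact mem_closedBall.2 (h2.trans (add_le_add (hLB k) (hCb k)))
  -- extract: convergent lengths
  obtain ⟨Loo, hLoomem, ψ, hψmono, hψtend⟩ :=
    (isCompact_Icc (a := (0:ℝ)) (b := B)).tendsto_subseq (fun k => ⟨hL0 k, hLB k⟩)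
  -- extract: pointwise convergence on rationals
  have hKpi : IsCompact (Set.univ.pi fun _ : ℚ => K) := isCompact_univ_pi fun _ => hKcomp
  obtain ⟨f, _, ρ, hρmono, hρtend⟩ :=
    hKpi.tendsto_subseq (x := fun j => fun q : ℚ => γ' (ψ j) (q : ℝ))
      (fun j => by intro q _; exact hγ'K (ψ j) q)
  set σ : ℕ → ℕ := ψ ∘ ρ with hσdef
  have hσmono : StrictMono σ := hψmono.comp hρmono
  have hLσ : Tendsto (fun j => L (σ j)) atTop (𝓝 Loo) := hψtend.comp (hρmono.tendsto_atTop)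
  have hq : ∀ q : ℚ, Tendsto (fun j => γ' (σ j) (q : ℝ)) atTop (𝓝 (f q)) := by
    intro q
    have := tendsto_pi_nhds.1 hρtend q
    exact this
  -- the full sequence of curves converges pointwise
  have hcauchy : ∀ t : ℝ, CauchySeq (fun j => γ' (σ j) t) := by
    intro t
    rw [Metric.cauchySeq_iff]
    intro δ hδ
    obtain ⟨q, hqt⟩ := exists_rat_near t (by linarith : (0:ℝ) < δ/4)
    have hcq : CauchySeq (fun j => γ' (σ j) (q : ℝ)) := (hq q).cauchySeq
    obtain ⟨N, hN⟩ := Metric.cauchySeq_iff.1 hcq (δ/4) (by linarith)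
    refine ⟨N, fun m hm n hn => ?_⟩
    have h1 : dist (γ' (σ m) t) (γ' (σ m) (q:ℝ)) ≤ dist t (q:ℝ) := by
      simpa using (hγ'lip (σ m)).dist_le_mul t (q:ℝ)
    have h2 : dist (γ' (σ n) (q:ℝ)) (γ' (σ n) t) ≤ dist (q:ℝ) t := by
      simpa using (hγ'lip (σ n)).dist_le_mul (q:ℝ) t
    have hqd : dist t (q:ℝ) < δ/4 := by rw [Real.dist_eq]; exact hqt
    have hqd' : dist (q:ℝ) t < δ/4 := by rw [dist_comm]; exact hqd
    calc dist (γ' (σ m) t) (γ' (σ n) t)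
        ≤ dist (γ' (σ m) t) (γ' (σ m) (q:ℝ)) + dist (γ' (σ m) (q:ℝ)) (γ' (σ n) (q:ℝ))
            + dist (γ' (σ n) (q:ℝ)) (γ' (σ n) t) := dist_triangle4 _ _ _ _
      _ < δ/4 + δ/4 + δ/4 := by
          refine add_lt_add (add_lt_add_of_lt_of_lt (lt_of_le_of_lt h1 hqd) (hN m hm n hn)) ?_
          exact lt_of_le_of_lt h2 hqd'
      _ < δ := by linarith
  have hlim : ∀ t : ℝ, ∃ z : Z, Tendsto (fun j => γ' (σ j) t) atTop (𝓝 z) :=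
    fun t => cauchySeq_tendsto_of_complete (hcauchy t)
  set γoo : ℝ → Z := fun t => (hlim t).choose with hγoodef
  have htend : ∀ t, Tendsto (fun j => γ' (σ j) t) atTop (𝓝 (γoo t)) :=
    fun t => (hlim t).choose_spec
  have hγoolip : LipschitzWith 1 γoo := by
    apply LipschitzWith.of_dist_le_mul
    intro s t
    refine le_of_tendsto ((htend s).dist (htend t)) (Eventually.of_forall fun j => ?_)
    exact (hγ'lip (σ j)).dist_le_mul s t
  have hγoo0 : γoo 0 = x := by
    refine tendsto_nhds_unique (htend 0) ?_
    have : (fun j => γ' (σ j) 0) = fun j => xn (φ (σ j)) := funext fun j => hγ'0 (σ j)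
    rw [this]
    exact hxφ.comp hσmono.tendsto_atTop
  have hyφσ : Tendsto (fun j => yn (φ (σ j))) atTop (𝓝 y) :=
    (hy.comp hφmono.tendsto_atTop).comp hσmono.tendsto_atTop
  have hγooL : γoo Loo = y := by
    refine tendsto_nhds_unique (htend Loo) ?_
    rw [tendsto_iff_dist_tendsto_zero]
    have hbnd : ∀ j, dist (γ' (σ j) Loo) y ≤ |Loo - L (σ j)| + dist (yn (φ (σ j))) y := by
      intro j
      calc dist (γ' (σ j) Loo) y
          ≤ dist (γ' (σ j) Loo) (γ' (σ j) (L (σ j))) + dist (γ' (σ j) (L (σ j))) y :=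
            dist_triangle _ _ _
        _ ≤ |Loo - L (σ j)| + dist (yn (φ (σ j))) y := by
            refine add_le_add ?_ (le_of_eq (by rw [hγ'L (σ j)]))
            simpa [Real.dist_eq] using (hγ'lip (σ j)).dist_le_mul Loo (L (σ j))
    have htend0 : Tendsto (fun j => |Loo - L (σ j)| + dist (yn (φ (σ j))) y) atTop (𝓝 0) := by
      have h1 : Tendsto (fun j => |Loo - L (σ j)|) atTop (𝓝 0) := by
        have := (tendsto_const_nhds (x := Loo) (f := atTop (α := ℕ))).sub hLσ
        rw [sub_self] at this
        simpa using this.abs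
      have h2 : Tendsto (fun j => dist (yn (φ (σ j))) y) atTop (𝓝 0) := by
        simpa [dist_self] using hyφσ.dist (tendsto_const_nhds : Tendsto (fun _ : ℕ => y) atTop (𝓝 y))
      simpa using h1.add h2
    exact squeeze_zero (fun j => dist_nonneg) hbnd htend0
  -- measurability
  set G : Z → ℝ≥0∞ := fun z => ENNReal.ofReal (g z) with hGdef
  have hGlsc : LowerSemicontinuous G :=
    ENNReal.continuous_ofReal.comp_lowerSemicontinuous hg fun a b hab =>
      ENNReal.ofReal_le_ofReal hab
  have hFmeas : ∀ k : ℕ, Measurable fun t : ℝ => G (γ' k t) :=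
    fun k => LowerSemicontinuous.measurable (LowerSemicontinuous.comp (f := G) (g := γ' k) hGlsc (hγ'lip k).continuous)
  have hFoomeas : Measurable fun t : ℝ => G (γoo t) :=
    LowerSemicontinuous.measurable (LowerSemicontinuous.comp (f := G) (g := γoo) hGlsc hγoolip.continuous)
  -- pointwise liminf bound from lower semicontinuity
  have hptwise : ∀ t : ℝ, G (γoo t) ≤ Filter.liminf (fun j => G (γ' (σ j) t)) atTop := by
    intro t
    have h1 : G (γoo t) ≤ Filter.liminf G (𝓝 (γoo t)) :=
      (lowerSemicontinuous_iff_le_liminf.1 hGlsc) (γoo t)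
    have h2 : Filter.liminf G (𝓝 (γoo t)) ≤
        Filter.liminf G (map (fun j => γ' (σ j) t) atTop) :=
      liminf_le_liminf_of_le (htend t)
    calc G (γoo t) ≤ Filter.liminf G (map (fun j => γ' (σ j) t) atTop) := h1.trans h2
      _ = Filter.liminf (fun j => G (γ' (σ j) t)) atTop := (liminf_comp G _ atTop).symm
  -- the integral over any strictly shorter interval is at most l + ε
  have hsub : ∀ L' : ℝ, 0 ≤ L' → L' < Loo →
      (∫⁻ t in Icc (0:ℝ) L', G (γoo t)) ≤ l + ε := by
    intro L' hL'0 hL'lt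
    have hfatou : (∫⁻ t in Icc (0:ℝ) L', G (γoo t)) ≤
        Filter.liminf (fun j => ∫⁻ t in Icc (0:ℝ) L', G (γ' (σ j) t)) atTop := by
      calc (∫⁻ t in Icc (0:ℝ) L', G (γoo t))
          ≤ ∫⁻ t in Icc (0:ℝ) L', Filter.liminf (fun j => G (γ' (σ j) t)) atTop :=
            lintegral_mono fun t => hptwise t
        _ ≤ Filter.liminf (fun j => ∫⁻ t in Icc (0:ℝ) L', G (γ' (σ j) t)) atTop :=
            lintegral_liminf_le fun j => hFmeas (σ j)
    refine hfatou.trans ?_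
    have hev : ∀ᶠ j in atTop, (∫⁻ t in Icc (0:ℝ) L', G (γ' (σ j) t)) ≤ l + ε := by
      filter_upwards [hLσ.eventually (eventually_gt_nhds hL'lt)] with j hj
      have heq : (∫⁻ t in Icc (0:ℝ) L', G (γ' (σ j) t)) =
          ∫⁻ t in Icc (0:ℝ) L', G (γ (σ j) t) := by
        refine setLIntegral_congr_fun measurableSet_Icc (fun t ht => ?_)
        have : c (σ j) t = t := hceq (σ j) t ⟨ht.1, ht.2.trans hj.le⟩
        simp only [hγ'def, hGdef, this]
      rw [heq]
      calc (∫⁻ t in Icc (0:ℝ) L', G (γ (σ j) t))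
          ≤ ∫⁻ t in Icc (0:ℝ) (L (σ j)), G (γ (σ j) t) :=
            lintegral_mono_set (Icc_subset_Icc le_rfl hj.le)
        _ ≤ l + ε := hint (σ j)
    calc Filter.liminf (fun j => ∫⁻ t in Icc (0:ℝ) L', G (γ' (σ j) t)) atTop
        ≤ Filter.liminf (fun _ : ℕ => l + (ε:ℝ≥0∞)) atTop := liminf_le_liminf hev
      _ = l + ε := liminf_const _
  -- the integral over the full interval
  have hmain : (∫⁻ t in Icc (0:ℝ) Loo, G (γoo t)) ≤ l + ε := by
    rcases eq_or_lt_of_le hLoomem.1 with h0 | h0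
    · have : volume (Icc (0:ℝ) Loo) = 0 := by
        rw [← h0]; simp
      rw [setLIntegral_measure_zero _ _ this]
      exact zero_le
    · -- 0 < Loo : monotone convergence from below
      set a : ℕ → ℝ := fun n => Loo - Loo / (n + 2) with hadef
      have ha0 : ∀ n, 0 ≤ a n := by
        intro n
        have : Loo / (n + 2) ≤ Loo := div_le_self h0.le (by have : (0:ℝ) ≤ (n:ℝ) := Nat.cast_nonneg n; linarith)
        simp [hadef]; linarith
      have haL : ∀ n, a n < Loo := by
        intro n
        have : 0 < Loo / (n + 2) := div_pos h0 (by positivity)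
        simp [hadef]; linarith
      have hamono : Monotone a := by
        intro m n hmn
        have : Loo / (n + 2) ≤ Loo / (m + 2) := by
          apply div_le_div_of_nonneg_left h0.le (by positivity)
          have : (m:ℝ) ≤ n := by exact_mod_cast hmn
          linarith
        simp only [hadef]; linarith
      set F : ℕ → ℝ → ℝ≥0∞ := fun n => (Icc (0:ℝ) (a n)).indicator (fun t => G (γoo t))
        with hFdef
      have hFmeas' : ∀ n, Measurable (F n) := fun n =>
        hFoomeas.indicator measurableSet_Icc
      have hFmono : Monotone F := by
        intro m n hmn t
        by_cases h : t ∈ Icc (0:ℝ) (a m)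
        · have h' : t ∈ Icc (0:ℝ) (a n) := ⟨h.1, h.2.trans (hamono hmn)⟩
          simp [hFdef, Set.indicator_of_mem, h, h']
        · simp [hFdef, Set.indicator_of_notMem, h]
      have hFsup : ∀ t, (⨆ n, F n t) = (Ico (0:ℝ) Loo).indicator (fun t => G (γoo t)) t := by
        intro t
        by_cases h : t ∈ Ico (0:ℝ) Loo
        · rw [Set.indicator_of_mem h]
          refine le_antisymm (iSup_le fun n => ?_) ?_
          · exact Set.indicator_apply_le fun _ => le_rfl
          · obtain ⟨n, hn⟩ := exists_nat_gt (Loo / (Loo - t))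
            have hsub : Loo / ((n:ℝ) + 2) < Loo - t := by
              rw [div_lt_iff₀ (by positivity)]
              rw [div_lt_iff₀ (by linarith [h.2] : (0:ℝ) < Loo - t)] at hn
              nlinarith [sub_pos.2 h.2]
            have htn : t ∈ Icc (0:ℝ) (a n) := ⟨h.1, by simp only [hadef]; linarith⟩
            calc G (γoo t) = F n t := by rw [hFdef]; simp [Set.indicator_of_mem htn]
              _ ≤ ⨆ m, F m t := le_iSup (fun m => F m t) n
        · rw [Set.indicator_of_notMem h]
          refine le_antisymm (iSup_le fun n => ?_) zero_le
          have : t ∉ Icc (0:ℝ) (a n) := by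
            intro ht
            exact h ⟨ht.1, lt_of_le_of_lt ht.2 (haL n)⟩
          simp [hFdef, Set.indicator_of_notMem this]
      calc (∫⁻ t in Icc (0:ℝ) Loo, G (γoo t))
          = ∫⁻ t in Ico (0:ℝ) Loo, G (γoo t) := (setLIntegral_congr Ico_ae_eq_Icc).symm
        _ = ∫⁻ t, (Ico (0:ℝ) Loo).indicator (fun t => G (γoo t)) t :=
            (lintegral_indicator measurableSet_Ico _).symm
        _ = ∫⁻ t, ⨆ n, F n t := by
            refine lintegral_congr fun t => ?_
            rw [hFsup t]
        _ = ⨆ n, ∫⁻ t, F n t := lintegral_iSup hFmeas' hFmono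
        _ = ⨆ n, ∫⁻ t in Icc (0:ℝ) (a n), G (γoo t) := by
            refine iSup_congr fun n => ?_
            rw [hFdef]
            exact lintegral_indicator measurableSet_Icc _
        _ ≤ l + ε := iSup_le fun n => hsub (a n) (ha0 n) (haL n)
  -- conclude
  refine le_trans ?_ hmain
  simp only [curveInf]
  exact iInf_le_of_le Loo (iInf_le_of_le hLoomem.1 (iInf_le_of_le γoo
    (iInf_le_of_le hγoolip.lipschitzOnWith (iInf_le_of_le hγoo0 (iInf_le _ hγooL)))))


end
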